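/- Let t > 1, 0 < δ < 1, Λ ≥ 0, and λ_c := t^{δ−1}/(1−t^{δ−1}). Let G be holomorphic on an open neighbourhood of the ray R := {r e^{iπ/4} : r ≥ 0}, and suppose there are constants A > 0 and p ≥ 0 with |G(u)| ≤ A(1+|u|)^p and |G′(u)| ≤ A(1+|u|)^p for all u ∈ R. Then all the following integrals converge absolutely and ∫_R G(u)·exp((i λ_c t/2)(u² + (2 ln(1+Λ)/(1+λ_c))·u)) du = G(0)·Φ(0;t,Λ) + ∫_R G′(u)·Φ(u;t,Λ) du. -/

import Mathlib

open MeasureTheory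

noncomputable section

/-- The unit direction `e^{iπ/4}`. -/
def e4 : ℂ := Complex.exp (Complex.I * (Real.pi / 4 : ℝ))

/-- The ray `{r e^{iπ/4} : r ≥ 0}`. -/
def ray : Set ℂ := {z : ℂ | ∃ r : ℝ, 0 ≤ r ∧ z = (r : ℂ) * e4}

/-- `λ_c := t^(δ-1)/(1-t^(δ-1))`. -/
def lamc (δ t : ℝ) : ℝ := t ^ (δ - 1) / (1 - t ^ (δ - 1))

/-- The exponential factor `exp((i λ_c t/2)(v² + (2 ln(1+Λ)/(1+λ_c))·v))`. -/
def phase (δ t Λ : ℝ) (v : ℂ) : ℂ :=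
  Complex.exp (Complex.I * ((lamc δ t * t / 2 : ℝ) : ℂ) *
    (v ^ 2 + ((2 * Real.log (1 + Λ) / (1 + lamc δ t) : ℝ) : ℂ) * v))

/-- `Φ(u;t,Λ)`: integral of the phase over the ray `{u + r e^{iπ/4} : r ≥ 0}`. -/
def Phi (δ t Λ : ℝ) (u : ℂ) : ℂ :=
  ∫ r in Set.Ioi (0 : ℝ), e4 * phase δ t Λ (u + (r : ℂ) * e4)

open Set Filter
open scoped Topology

lemma polyGauss_le {b p : ℝ} (hb : 0 < b) (hp : 0 ≤ p) {s : ℝ} (hs : 0 ≤ s) :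
    (1 + s) ^ p * Real.exp (-b * s ^ 2)
      ≤ Real.exp (p + p ^ 2 / (2 * b)) * Real.exp (-(b / 2) * s ^ 2) := by
  have h0 : (0:ℝ) < 1 + s := by linarith
  rw [Real.rpow_def_of_pos h0, ← Real.exp_add, ← Real.exp_add]
  apply Real.exp_le_exp.2
  have hlog : Real.log (1 + s) ≤ s := by
    have := Real.log_le_sub_one_of_pos h0; linarith
  have h1 : Real.log (1 + s) * p ≤ s * p :=
    mul_le_mul_of_nonneg_right hlog hp
  have h2 : p ^ 2 / (2 * b) * (2 * b) = p ^ 2 := div_mul_cancel₀ _ (by positivity)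
  nlinarith [sq_nonneg (b * s - p), mul_nonneg hb.le hp, h2, mul_pos hb hb]

lemma polyGauss_integrable {b p : ℝ} (hb : 0 < b) (hp : 0 ≤ p) :
    IntegrableOn (fun s : ℝ => (1 + s) ^ p * Real.exp (-b * s ^ 2)) (Ioi 0) := by
  have hdom : IntegrableOn
      (fun s : ℝ => Real.exp (p + p ^ 2 / (2 * b)) * Real.exp (-(b / 2) * s ^ 2)) (Ioi 0) :=
    ((integrable_exp_neg_mul_sq (by positivity)).const_mul _).integrableOn
  refine hdom.mono' ?_ ?_
  · apply ContinuousOn.aestronglyMeasurable ?_ measurableSet_Ioi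
    apply ContinuousOn.mul ?_ (Continuous.continuousOn (by continuity))
    intro x hx
    exact ((Real.continuousAt_rpow_const _ _ (Or.inr hp)).comp
      (by continuity : Continuous fun s : ℝ => 1 + s).continuousAt).continuousWithinAt
  · filter_upwards [ae_restrict_mem measurableSet_Ioi] with s hs
    have hs' : (0:ℝ) ≤ s := le_of_lt hs
    rw [Real.norm_eq_abs, abs_of_nonneg (by positivity)]
    exact polyGauss_le hb hp hs'

lemma polyGauss_tendsto {b p : ℝ} (hb : 0 < b) (hp : 0 ≤ p) :
    Tendsto (fun s : ℝ => (1 + s) ^ p * Real.exp (-b * s ^ 2)) atTop (𝓝 0) := by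
  have h2 : Tendsto (fun s : ℝ => Real.exp (p + p ^ 2 / (2 * b)) *
      Real.exp (-(b / 2) * s ^ 2)) atTop (𝓝 (Real.exp (p + p ^ 2 / (2 * b)) * 0)) := by
    apply Tendsto.const_mul
    exact Real.tendsto_exp_atBot.comp
      ((tendsto_pow_atTop two_ne_zero).const_mul_atTop_of_neg (by linarith))
  rw [mul_zero] at h2
  apply squeeze_zero_norm' ?_ h2
  filter_upwards [eventually_ge_atTop (0:ℝ)] with s hs
  rw [Real.norm_eq_abs, abs_of_nonneg (by positivity)]
  exact polyGauss_le hb hp hs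

lemma e4_sq : e4 ^ 2 = Complex.I := by
  rw [e4, ← Complex.exp_nat_mul]
  have : ((2 : ℕ) : ℂ) * (Complex.I * ((Real.pi / 4 : ℝ) : ℂ))
      = ((Real.pi / 2 : ℝ) : ℂ) * Complex.I := by
    push_cast; ring
  rw [this, Complex.exp_mul_I, ← Complex.ofReal_cos, ← Complex.ofReal_sin,
    Real.cos_pi_div_two, Real.sin_pi_div_two]
  simp

lemma abs_e4 : ‖e4‖ = 1 := by
  rw [e4, Complex.norm_exp]
  have : (Complex.I * ((Real.pi / 4 : ℝ) : ℂ)).re = 0 := by simp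
  rw [this, Real.exp_zero]

lemma e4_im_nonneg : 0 ≤ e4.im := by
  rw [e4]
  have : Complex.I * ((Real.pi / 4 : ℝ) : ℂ) = ((Real.pi / 4 : ℝ) : ℂ) * Complex.I := mul_comm _ _
  rw [this, Complex.exp_ofReal_mul_I_im]
  exact Real.sin_nonneg_of_nonneg_of_le_pi (by positivity) (by linarith [Real.pi_pos])

lemma lamc_pos {δ t : ℝ} (ht : 1 < t) (hδ1 : δ < 1) : 0 < lamc δ t := by
  have h1 : (0:ℝ) < t ^ (δ - 1) := Real.rpow_pos_of_pos (by linarith) _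
  have h2 : t ^ (δ - 1) < 1 := Real.rpow_lt_one_of_one_lt_of_neg ht (by linarith)
  exact div_pos h1 (by linarith)

lemma phase_eq (δ t Λ : ℝ) (s : ℝ) :
    phase δ t Λ ((s : ℂ) * e4) =
      Complex.exp (((-(lamc δ t * t / 2) * s ^ 2 : ℝ) : ℂ) +
        (Complex.I * ((lamc δ t * t / 2 : ℝ) : ℂ) *
          ((2 * Real.log (1 + Λ) / (1 + lamc δ t) : ℝ) : ℂ) * e4) * (s : ℂ)) := by
  rw [phase]
  congr 1
  rw [mul_pow, e4_sq]
  push_cast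
  ring_nf
  rw [Complex.I_sq]
  ring

/-- one integration by parts for ray integrals against the phase. -/
theorem stmt_4 (δ t Λ : ℝ) (ht : 1 < t) (hδ0 : 0 < δ) (hδ1 : δ < 1) (hΛ : 0 ≤ Λ)
    (V : Set ℂ) (hV : IsOpen V) (hrayV : ray ⊆ V)
    (G : ℂ → ℂ) (hG : DifferentiableOn ℂ G V)
    (A p : ℝ) (hA : 0 < A) (hp : 0 ≤ p)
    (hGbound : ∀ u ∈ ray, ‖G u‖ ≤ A * (1 + ‖u‖) ^ p)
    (hGbound' : ∀ u ∈ ray, ‖deriv G u‖ ≤ A * (1 + ‖u‖) ^ p) :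
    IntegrableOn (fun r : ℝ => e4 * (G ((r : ℂ) * e4) * phase δ t Λ ((r : ℂ) * e4)))
        (Set.Ioi 0) ∧
      (∀ u ∈ ray, IntegrableOn (fun r : ℝ => e4 * phase δ t Λ (u + (r : ℂ) * e4))
        (Set.Ioi 0)) ∧
      IntegrableOn (fun r : ℝ => e4 * (deriv G ((r : ℂ) * e4) * Phi δ t Λ ((r : ℂ) * e4)))
        (Set.Ioi 0) ∧
      (∫ r in Set.Ioi (0 : ℝ), e4 * (G ((r : ℂ) * e4) * phase δ t Λ ((r : ℂ) * e4))) =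
        G 0 * Phi δ t Λ 0 +
          ∫ r in Set.Ioi (0 : ℝ),
            e4 * (deriv G ((r : ℂ) * e4) * Phi δ t Λ ((r : ℂ) * e4)) := by
  have hl : 0 < lamc δ t := lamc_pos ht hδ1
  set a : ℝ := lamc δ t * t / 2 with ha_def
  have ha : 0 < a := div_pos (mul_pos hl (by linarith)) two_pos
  have ha2 : 0 < a / 2 := by linarith
  set c : ℝ := 2 * Real.log (1 + Λ) / (1 + lamc δ t) with hc_def
  have hc : 0 ≤ c := div_nonneg (mul_nonneg (by norm_num) (Real.log_nonneg (by linarith))) (by linarith)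
  set γ : ℂ := Complex.I * ((a : ℝ) : ℂ) * ((c : ℝ) : ℂ) * e4 with hγ_def
  have hγre : γ.re ≤ 0 := by
    have h1 : γ.re = -(a * c * e4.im) := by
      rw [hγ_def]
      simp [Complex.mul_re, Complex.mul_im]
    rw [h1, neg_nonpos]
    exact mul_nonneg (mul_nonneg ha.le hc) e4_im_nonneg
  set f : ℝ → ℂ := fun s => Complex.exp (((-a * s ^ 2 : ℝ) : ℂ) + γ * (s : ℂ)) with hf_def
  have hphase : ∀ s : ℝ, phase δ t Λ ((s : ℂ) * e4) = f s := by
    intro s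
    rw [phase_eq δ t Λ s, hf_def]
  have hfcont : Continuous f := by
    apply Complex.continuous_exp.comp
    exact (Complex.continuous_ofReal.comp (by continuity)).add
      (continuous_const.mul Complex.continuous_ofReal)
  have hfle : ∀ s : ℝ, 0 ≤ s → ‖f s‖ ≤ Real.exp (-a * s ^ 2) := by
    intro s hs
    rw [hf_def, Complex.norm_exp]
    apply Real.exp_le_exp.2
    have hre : ((((-a * s ^ 2 : ℝ)) : ℂ) + γ * (s : ℂ)).re = -a * s ^ 2 + γ.re * s := by
      simp [Complex.add_re, Complex.mul_re, ← Complex.ofReal_pow]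
    rw [hre]
    nlinarith [mul_nonpos_of_nonpos_of_nonneg hγre hs]
  have hfint : IntegrableOn f (Ioi 0) := by
    refine ((integrable_exp_neg_mul_sq ha).integrableOn).mono'
      hfcont.aestronglyMeasurable.restrict ?_
    filter_upwards [ae_restrict_mem measurableSet_Ioi] with s hs
    simpa using hfle s hs.le
  -- the primitive F
  set F : ℝ → ℂ := fun s => (∫ x in Ioi (0:ℝ), f x) - ∫ x in (0:ℝ)..s, f x with hF_def
  have hF' : ∀ s : ℝ, HasDerivAt F (-f s) s := by
    intro s
    have h1 : HasDerivAt (fun u : ℝ => ∫ x in (0:ℝ)..u, f x) (f s) s :=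
      intervalIntegral.integral_hasDerivAt_right (hfcont.intervalIntegrable _ _)
        hfcont.stronglyMeasurable.stronglyMeasurableAtFilter hfcont.continuousAt
    exact HasDerivAt.const_sub _ h1
  have hFc : Continuous F := by
    have : Differentiable ℝ F := fun s => (hF' s).differentiableAt
    exact this.continuous
  have hFIoi : ∀ s : ℝ, 0 ≤ s → F s = ∫ x in Ioi s, f x := by
    intro s hs
    have hu : Ioc (0:ℝ) s ∪ Ioi s = Ioi 0 := Ioc_union_Ioi_eq_Ioi hs
    have h2 : ∫ x in Ioi (0:ℝ), f x = (∫ x in Ioc (0:ℝ) s, f x) + ∫ x in Ioi s, f x := by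
      rw [← hu]
      exact setIntegral_union (Ioc_disjoint_Ioi le_rfl) measurableSet_Ioi
        (hfint.mono_set Ioc_subset_Ioi_self) (hfint.mono_set (Ioi_subset_Ioi hs))
    simp only [hF_def]
    rw [intervalIntegral.integral_of_le hs, h2]
    ring
  set K : ℝ := ∫ x in Ioi (0:ℝ), Real.exp (-(a/2) * x ^ 2) with hK_def
  have hK0 : 0 ≤ K := setIntegral_nonneg measurableSet_Ioi fun x _ => (Real.exp_pos _).le
  have hgauss2 : IntegrableOn (fun x : ℝ => Real.exp (-(a/2) * x ^ 2)) (Ioi 0) :=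
    (integrable_exp_neg_mul_sq ha2).integrableOn
  have hFbound : ∀ s : ℝ, 0 ≤ s → ‖F s‖ ≤ Real.exp (-(a/2) * s ^ 2) * K := by
    intro s hs
    rw [hFIoi s hs]
    have hsub : Ioi s ⊆ Ioi (0:ℝ) := Ioi_subset_Ioi hs
    have step1 : ‖∫ x in Ioi s, f x‖ ≤ ∫ x in Ioi s, ‖f x‖ := by
      simpa using
        norm_integral_le_integral_norm (μ := volume.restrict (Ioi s)) f
    have step2 : (∫ x in Ioi s, ‖f x‖)
        ≤ ∫ x in Ioi s, Real.exp (-(a/2) * s ^ 2) * Real.exp (-(a/2) * x ^ 2) := by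
      apply setIntegral_mono_on (hfint.mono_set hsub).norm
        (((hgauss2.mono_set hsub)).const_mul _) measurableSet_Ioi
      intro x hx
      have hx0 : (0:ℝ) ≤ x := le_trans hs (le_of_lt hx)
      have hxs : s ≤ x := le_of_lt hx
      have hx2 : s ^ 2 ≤ x ^ 2 := by nlinarith
      calc ‖f x‖ = ‖f x‖ := rfl
        _ ≤ Real.exp (-a * x ^ 2) := hfle x hx0
        _ ≤ Real.exp (-(a/2) * s ^ 2) * Real.exp (-(a/2) * x ^ 2) := by
            rw [← Real.exp_add]
            apply Real.exp_le_exp.2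
            nlinarith [hx2, ha]
    have step3 : (∫ x in Ioi s, Real.exp (-(a/2) * s ^ 2) * Real.exp (-(a/2) * x ^ 2))
        = Real.exp (-(a/2) * s ^ 2) * ∫ x in Ioi s, Real.exp (-(a/2) * x ^ 2) :=
      integral_const_mul _ _
    have step4 : (∫ x in Ioi s, Real.exp (-(a/2) * x ^ 2)) ≤ K := by
      rw [hK_def]
      apply setIntegral_mono_set hgauss2
      · exact Filter.Eventually.of_forall fun x => (Real.exp_pos _).le
      · exact Filter.Eventually.of_forall hsub
    calc ‖∫ x in Ioi s, f x‖ ≤ _ := step1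
      _ ≤ _ := step2
      _ = _ := step3
      _ ≤ Real.exp (-(a/2) * s ^ 2) * K :=
          mul_le_mul_of_nonneg_left step4 (Real.exp_pos _).le
  -- g and its derivative
  have hmemray : ∀ s : ℝ, 0 ≤ s → ((s : ℂ) * e4) ∈ ray := fun s hs => ⟨s, hs, rfl⟩
  have hmemV : ∀ s : ℝ, 0 ≤ s → ((s : ℂ) * e4) ∈ V := fun s hs => hrayV (hmemray s hs)
  set g : ℝ → ℂ := fun s => G ((s : ℂ) * e4) with hg_def
  have hgd : ∀ s : ℝ, 0 ≤ s → HasDerivAt g (deriv G ((s : ℂ) * e4) * e4) s := by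
    intro s hs
    have hGd : DifferentiableAt ℂ G ((s : ℂ) * e4) :=
      hG.differentiableAt (hV.mem_nhds (hmemV s hs))
    have h1 : HasDerivAt (fun z : ℂ => G (z * e4)) (deriv G ((s : ℂ) * e4) * (1 * e4)) (s : ℂ) :=
      HasDerivAt.comp _ hGd.hasDerivAt ((hasDerivAt_id _).mul_const e4)
    simpa [Function.comp] using h1.comp_ofReal
  have hgc : ∀ s : ℝ, 0 ≤ s → ContinuousAt g s := fun s hs => (hgd s hs).continuousAt
  have hGan : AnalyticOnNhd ℂ G V := hG.analyticOnNhd hV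
  have hdGc : ∀ s : ℝ, 0 ≤ s → ContinuousAt (fun r : ℝ => deriv G ((r : ℂ) * e4)) s := by
    intro s hs
    have hc1 : ContinuousAt (deriv G) ((s : ℂ) * e4) := (hGan.deriv _ (hmemV s hs)).continuousAt
    have hc2 : ContinuousAt (fun r : ℝ => (r : ℂ) * e4) s :=
      (Complex.continuous_ofReal.mul continuous_const).continuousAt
    exact (ContinuousAt.comp (g := deriv G) (f := fun r : ℝ => (r : ℂ) * e4) hc1 hc2 :)
  have habs_se4 : ∀ s : ℝ, 0 ≤ s → ‖(s : ℂ) * e4‖ = s := by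
    intro s hs
    rw [norm_mul, abs_e4, mul_one, Complex.norm_real, Real.norm_eq_abs, abs_of_nonneg hs]
  -- translation
  have htrans : ∀ s : ℝ, 0 ≤ s → (∫ r in Ioi (0:ℝ), f (s + r)) = ∫ x in Ioi s, f x := by
    intro s hs
    have hmp : MeasurePreserving (fun x : ℝ => x + s) volume volume :=
      measurePreserving_add_right volume s
    have hemb : MeasurableEmbedding (fun x : ℝ => x + s) :=
      (MeasurableEquiv.addRight s).measurableEmbedding
    have hpre : (fun x : ℝ => x + s) ⁻¹' Ioi s = Ioi 0 := by
      ext x; simp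
    have h1 : (∫ r in Ioi (0:ℝ), f (s + r)) = ∫ r in (fun x : ℝ => x + s) ⁻¹' Ioi s, f (r + s) := by
      rw [hpre]
      apply setIntegral_congr_fun measurableSet_Ioi
      intro r _
      simp only [add_comm]
    rw [h1]
    exact hmp.setIntegral_preimage_emb hemb f (Ioi s)
  have htransInt : ∀ s : ℝ, 0 ≤ s → IntegrableOn (fun r : ℝ => f (s + r)) (Ioi 0) := by
    intro s hs
    have hmp : MeasurePreserving (fun x : ℝ => x + s) volume volume :=
      measurePreserving_add_right volume s
    have hemb : MeasurableEmbedding (fun x : ℝ => x + s) :=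
      (MeasurableEquiv.addRight s).measurableEmbedding
    have hpre : (fun x : ℝ => x + s) ⁻¹' Ioi s = Ioi 0 := by
      ext x; simp
    have h1 := (hmp.integrableOn_comp_preimage hemb (f := f) (s := Ioi s)).2
      (hfint.mono_set (Ioi_subset_Ioi hs))
    rw [hpre] at h1
    exact MeasureTheory.IntegrableOn.congr_fun h1 (fun r _ => by simp [Function.comp, add_comm]) measurableSet_Ioi
  -- Phi in terms of F
  have hPhi : ∀ s : ℝ, 0 ≤ s → Phi δ t Λ ((s : ℂ) * e4) = e4 * F s := by
    intro s hs
    rw [Phi]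
    have h1 : ∀ r : ℝ, e4 * phase δ t Λ ((s : ℂ) * e4 + (r : ℂ) * e4) = e4 * f (s + r) := by
      intro r
      have : (s : ℂ) * e4 + (r : ℂ) * e4 = ((s + r : ℝ) : ℂ) * e4 := by push_cast; ring
      rw [this, hphase]
    calc (∫ r in Ioi (0:ℝ), e4 * phase δ t Λ ((s : ℂ) * e4 + (r : ℂ) * e4))
        = ∫ r in Ioi (0:ℝ), e4 * f (s + r) := by
          apply setIntegral_congr_fun measurableSet_Ioi
          intro r _; exact h1 r
      _ = e4 * ∫ r in Ioi (0:ℝ), f (s + r) := integral_const_mul _ _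
      _ = e4 * F s := by rw [htrans s hs, hFIoi s hs]
  have hPhi0 : Phi δ t Λ 0 = e4 * F 0 := by
    have := hPhi 0 le_rfl
    simpa using this
  -- integrability of g*f
  have hQmeas : AEStronglyMeasurable (fun s : ℝ => g s * f s) (volume.restrict (Ioi 0)) := by
    apply ContinuousOn.aestronglyMeasurable ?_ measurableSet_Ioi
    exact ContinuousOn.mul (fun s hs => (hgc s (le_of_lt hs)).continuousWithinAt)
      hfcont.continuousOn
  have hQint : IntegrableOn (fun s : ℝ => g s * f s) (Ioi 0) := by
    refine ((polyGauss_integrable ha hp).const_mul A).mono' hQmeas ?_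
    filter_upwards [ae_restrict_mem measurableSet_Ioi] with s hs
    have hs0 : (0:ℝ) ≤ s := hs.le
    rw [norm_mul]
    have hgb : ‖g s‖ ≤ A * (1 + s) ^ p := by
      have := hGbound _ (hmemray s hs0)
      rwa [habs_se4 s hs0] at this
    calc ‖g s‖ * ‖f s‖
        ≤ (A * (1 + s) ^ p) * Real.exp (-a * s ^ 2) :=
          mul_le_mul hgb (hfle s hs0) (norm_nonneg _) (by positivity)
      _ = A * ((1 + s) ^ p * Real.exp (-a * s ^ 2)) := by ring
  -- integrability of deriv G * e4 * F
  have hPmeas : AEStronglyMeasurable (fun s : ℝ => deriv G ((s : ℂ) * e4) * e4 * F s)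
      (volume.restrict (Ioi 0)) := by
    apply ContinuousOn.aestronglyMeasurable ?_ measurableSet_Ioi
    exact ContinuousOn.mul (ContinuousOn.mul
      (fun s hs => (hdGc s (le_of_lt hs)).continuousWithinAt) continuousOn_const)
      hFc.continuousOn
  have hPbound : ∀ s : ℝ, 0 ≤ s →
      ‖deriv G ((s : ℂ) * e4) * e4 * F s‖
        ≤ (A * K) * ((1 + s) ^ p * Real.exp (-(a/2) * s ^ 2)) := by
    intro s hs0
    have hdb : ‖deriv G ((s : ℂ) * e4)‖ ≤ A * (1 + s) ^ p := by
      have := hGbound' _ (hmemray s hs0)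
      rwa [habs_se4 s hs0] at this
    calc ‖deriv G ((s : ℂ) * e4) * e4 * F s‖
        = ‖deriv G ((s : ℂ) * e4)‖ * ‖F s‖ := by
          rw [norm_mul, norm_mul, abs_e4, mul_one]
      _ ≤ (A * (1 + s) ^ p) * (Real.exp (-(a/2) * s ^ 2) * K) :=
          mul_le_mul hdb (hFbound s hs0) (norm_nonneg _) (by positivity)
      _ = (A * K) * ((1 + s) ^ p * Real.exp (-(a/2) * s ^ 2)) := by ring
  have hPint : IntegrableOn (fun s : ℝ => deriv G ((s : ℂ) * e4) * e4 * F s) (Ioi 0) := by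
    refine ((polyGauss_integrable ha2 hp).const_mul (A * K)).mono' hPmeas ?_
    filter_upwards [ae_restrict_mem measurableSet_Ioi] with s hs
    exact hPbound s hs.le
  -- H = g * F tends to 0
  have hHt : Tendsto (fun s : ℝ => g s * F s) atTop (𝓝 0) := by
    have h2 : Tendsto (fun s : ℝ => (A * K) * ((1 + s) ^ p * Real.exp (-(a/2) * s ^ 2)))
        atTop (𝓝 ((A * K) * 0)) := (polyGauss_tendsto ha2 hp).const_mul _
    rw [mul_zero] at h2
    apply squeeze_zero_norm' ?_ h2
    filter_upwards [eventually_ge_atTop (0:ℝ)] with s hs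
    rw [norm_mul]
    have hgb : ‖g s‖ ≤ A * (1 + s) ^ p := by
      have := hGbound _ (hmemray s hs)
      rwa [habs_se4 s hs] at this
    calc ‖g s‖ * ‖F s‖
        ≤ (A * (1 + s) ^ p) * (Real.exp (-(a/2) * s ^ 2) * K) :=
          mul_le_mul hgb (hFbound s hs) (norm_nonneg _) (by positivity)
      _ = (A * K) * ((1 + s) ^ p * Real.exp (-(a/2) * s ^ 2)) := by ring
  -- the FTC/IBP step
  have key : (∫ s in Ioi (0:ℝ), (deriv G ((s : ℂ) * e4) * e4 * F s - g s * f s))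
      = 0 - g 0 * F 0 := by
    refine integral_Ioi_of_hasDerivAt_of_tendsto (f := fun s => g s * F s) (m := 0) ?_ ?_ ?_ ?_
    · exact ((hgd 0 le_rfl).mul (hF' 0)).continuousAt.continuousWithinAt
    · intro x hx
      have h : deriv G ((x : ℂ) * e4) * e4 * F x - g x * f x
          = deriv G ((x : ℂ) * e4) * e4 * F x + g x * (-f x) := by ring
      rw [h]
      exact (hgd x (le_of_lt hx)).mul (hF' x)
    · exact hPint.sub hQint
    · exact hHt
  have hint_eq : (∫ s in Ioi (0:ℝ), deriv G ((s : ℂ) * e4) * e4 * F s)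
      - ∫ s in Ioi (0:ℝ), g s * f s = -(g 0 * F 0) := by
    rw [← integral_sub hPint hQint, key]; ring
  have main : (∫ s in Ioi (0:ℝ), g s * f s)
      = g 0 * F 0 + ∫ s in Ioi (0:ℝ), deriv G ((s : ℂ) * e4) * e4 * F s := by
    linear_combination -hint_eq
  refine ⟨?_, ?_, ?_, ?_⟩
  · have heq : (fun r : ℝ => e4 * (G ((r : ℂ) * e4) * phase δ t Λ ((r : ℂ) * e4)))
        = fun r : ℝ => e4 * (g r * f r) := by
      funext r; rw [hphase]
    rw [heq]
    exact hQint.const_mul e4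
  · rintro u ⟨s, hs, rfl⟩
    have heq : (fun r : ℝ => e4 * phase δ t Λ ((s : ℂ) * e4 + (r : ℂ) * e4))
        = fun r : ℝ => e4 * f (s + r) := by
      funext r
      have : (s : ℂ) * e4 + (r : ℂ) * e4 = ((s + r : ℝ) : ℂ) * e4 := by push_cast; ring
      rw [this, hphase]
    rw [heq]
    exact (htransInt s hs).const_mul e4
  · apply MeasureTheory.IntegrableOn.congr_fun (hPint.const_mul e4) ?_ measurableSet_Ioi
    intro r hr
    simp only [hPhi r (le_of_lt hr)]
    ring
  · have hL : (∫ r in Ioi (0:ℝ), e4 * (G ((r : ℂ) * e4) * phase δ t Λ ((r : ℂ) * e4)))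
        = e4 * ∫ s in Ioi (0:ℝ), g s * f s := by
      rw [← integral_const_mul]
      apply setIntegral_congr_fun measurableSet_Ioi
      intro r _
      simp only [hphase]
      rfl
    have hR : (∫ r in Ioi (0:ℝ), e4 * (deriv G ((r : ℂ) * e4) * Phi δ t Λ ((r : ℂ) * e4)))
        = e4 * ∫ s in Ioi (0:ℝ), deriv G ((s : ℂ) * e4) * e4 * F s := by
      rw [← integral_const_mul]
      apply setIntegral_congr_fun measurableSet_Ioi
      intro r hr
      simp only [hPhi r (le_of_lt hr)]
      ring
    have hG0 : G 0 = g 0 := by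
      rw [hg_def]
      norm_num
    rw [hL, hR, hPhi0, hG0, main]
    ring
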